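/- Let G be a finite simple graph admitting a trapezoid representation. Then every cycle in G of length greater than four contains a chord: if v₀, v₁, …, v_{k-1}, v₀ is a cycle of G with k ≥ 5 distinct vertices, then there exist two vertices v_i and v_j that are not consecutive on the cycle (i.e., |i − j| ≢ 1 (mod k)) but are adjacent in G. -/

import Mathlib

/-- A trapezoid representation of a finite simple graph `G`. -/
def IsTrapRep {V : Type*} (G : SimpleGraph V) (a b c d : V → ℝ) : Prop :=
  (∀ i, a i ≤ b i) ∧ (∀ i, c i ≤ d i) ∧
  Function.Injective (fun p : V × Bool => if p.2 then b p.1 else a p.1) ∧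
  Function.Injective (fun p : V × Bool => if p.2 then d p.1 else c p.1) ∧
  ∀ i j : V, i ≠ j →
    (G.Adj i j ↔ ¬((b i < a j ∧ d i < c j) ∨ (b j < a i ∧ d j < c i)))

/-- In a trapezoid graph, every cycle of length greater than four contains a chord:
two vertices of the cycle that are not consecutive on it but are adjacent in `G`. -/
theorem trapezoid_long_cycle_has_chord {V : Type*} [Fintype V] (G : SimpleGraph V)
    (hrep : ∃ a b c d : V → ℝ, IsTrapRep G a b c d)
    (k : ℕ) (hk : 5 ≤ k) (v : ZMod k → V)
    (hinj : Function.Injective v)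
    (hcyc : ∀ i : ZMod k, G.Adj (v i) (v (i + 1))) :
    ∃ i j : ZMod k, G.Adj (v i) (v j) ∧ i ≠ j + 1 ∧ j ≠ i + 1 := by
  obtain ⟨a, b, c, d, hab, hcd, -, -, hadj⟩ := hrep
  by_contra hcon
  push_neg at hcon
  haveI : NeZero k := ⟨by omega⟩
  -- the strict partial order "strictly to the left"
  set P : ZMod k → ZMod k → Prop :=
    fun i j => b (v i) < a (v j) ∧ d (v i) < c (v j) with hP
  have ptrans : ∀ {i j l : ZMod k}, P i j → P j l → P i l := by
    intro i j l h1 h2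
    exact ⟨(h1.1.trans_le (hab (v j))).trans h2.1,
      (h1.2.trans_le (hcd (v j))).trans h2.2⟩
  have pirrefl : ∀ i : ZMod k, ¬ P i i := by
    intro i h
    exact absurd (hab (v i)) (not_le.mpr h.1)
  have hm0 : ∀ m : ℕ, 0 < m → m < 5 → ((m : ℕ) : ZMod k) ≠ 0 := by
    intro m hm1 hm2 h
    rw [ZMod.natCast_eq_zero_iff] at h
    have := Nat.le_of_dvd hm1 h
    omega
  have h1 : (1 : ZMod k) ≠ 0 := by simpa using hm0 1 (by omega) (by omega)
  have h2 : (2 : ZMod k) ≠ 0 := by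
    have := hm0 2 (by omega) (by omega); push_cast at this; exact this
  have h3 : (3 : ZMod k) ≠ 0 := by
    have := hm0 3 (by omega) (by omega); push_cast at this; exact this
  have h4 : (4 : ZMod k) ≠ 0 := by
    have := hm0 4 (by omega) (by omega); push_cast at this; exact this
  -- non-consecutive distinct vertices are comparable
  have comp : ∀ i j : ZMod k, i ≠ j → i ≠ j + 1 → j ≠ i + 1 → P i j ∨ P j i := by
    intro i j hij hij1 hji1
    by_contra hnc
    have hne : v i ≠ v j := fun h => hij (hinj h)
    have hA : G.Adj (v i) (v j) := by
      rw [hadj (v i) (v j) hne]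
      simpa [hP] using hnc
    exact hji1 (hcon i j hA hij1)
  -- consecutive vertices are incomparable
  have nocons : ∀ i j : ZMod k, j = i + 1 → ¬ (P i j ∨ P j i) := by
    intro i j hji
    subst hji
    have hA := hcyc i
    have hne : v i ≠ v (i + 1) := hA.ne
    have := (hadj (v i) (v (i + 1)) hne).mp hA
    simpa [hP] using this
  -- forcing steps
  have step1 : ∀ i : ZMod k, P i (i + 2) → P (i + 1) (i + 1 + 2) := by
    intro i h
    have hi3 : P i (i + 3) := by
      rcases comp i (i + 3) (fun hh => h3 (by linear_combination -hh))
          (fun hh => h4 (by linear_combination -hh))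
          (fun hh => h2 (by linear_combination hh)) with h' | h'
      · exact h'
      · exact absurd (Or.inr (ptrans h' h)) (nocons (i + 2) (i + 3) (by ring))
    rcases comp (i + 1) (i + 3) (fun hh => h2 (by linear_combination -hh))
        (fun hh => h3 (by linear_combination -hh))
        (fun hh => h1 (by linear_combination hh)) with h' | h'
    · rw [show (i + 1 + 2 : ZMod k) = i + 3 by ring]; exact h'
    · exact absurd (Or.inl (ptrans hi3 h')) (nocons i (i + 1) rfl)
  have step2 : ∀ i : ZMod k, P (i + 2) i → P (i + 1 + 2) (i + 1) := by
    intro i h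
    have hi3 : P (i + 3) i := by
      rcases comp i (i + 3) (fun hh => h3 (by linear_combination -hh))
          (fun hh => h4 (by linear_combination -hh))
          (fun hh => h2 (by linear_combination hh)) with h' | h'
      · exact absurd (Or.inl (ptrans h h')) (nocons (i + 2) (i + 3) (by ring))
      · exact h'
    rcases comp (i + 1) (i + 3) (fun hh => h2 (by linear_combination -hh))
        (fun hh => h3 (by linear_combination -hh))
        (fun hh => h1 (by linear_combination hh)) with h' | h'
    · exact absurd (Or.inr (ptrans h' hi3)) (nocons i (i + 1) rfl)
    · rw [show (i + 1 + 2 : ZMod k) = i + 3 by ring]; exact h'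
  -- initial comparability of v 0 and v 2
  rcases comp 0 2 (fun hh => h2 hh.symm)
      (fun hh => h3 (by linear_combination -hh))
      (fun hh => h1 (by linear_combination hh)) with hbase | hbase
  · -- propagate forwards
    have hall : ∀ n : ℕ, P ((n : ℕ) : ZMod k) (((n : ℕ) : ZMod k) + 2) := by
      intro n
      induction n with
      | zero => simpa using hbase
      | succ n ih =>
          have := step1 _ ih
          push_cast
          push_cast at this
          exact this
    have hallZ : ∀ i : ZMod k, P i (i + 2) := by
      intro i
      obtain ⟨n, rfl⟩ := ZMod.natCast_zmod_surjective i
      exact hall n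
    have hchain : ∀ n : ℕ, P 0 (((2 * n + 2 : ℕ) : ZMod k)) := by
      intro n
      induction n with
      | zero => simpa using hbase
      | succ n ih =>
          have h' := ptrans ih (hallZ ((2 * n + 2 : ℕ) : ZMod k))
          have he : ((2 * (n + 1) + 2 : ℕ) : ZMod k) = ((2 * n + 2 : ℕ) : ZMod k) + 2 := by
            push_cast; ring
          rw [he]
          exact h'
    have hfin := hchain (k - 1)
    have he : ((2 * (k - 1) + 2 : ℕ) : ZMod k) = 0 := by
      have : 2 * (k - 1) + 2 = 2 * k := by omega
      rw [this]
      push_cast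
      simp [ZMod.natCast_self]
    rw [he] at hfin
    exact pirrefl 0 hfin
  · -- propagate backwards
    have hall : ∀ n : ℕ, P (((n : ℕ) : ZMod k) + 2) ((n : ℕ) : ZMod k) := by
      intro n
      induction n with
      | zero => simpa using hbase
      | succ n ih =>
          have := step2 _ ih
          push_cast
          push_cast at this
          exact this
    have hallZ : ∀ i : ZMod k, P (i + 2) i := by
      intro i
      obtain ⟨n, rfl⟩ := ZMod.natCast_zmod_surjective i
      exact hall n
    have hchain : ∀ n : ℕ, P (((2 * n + 2 : ℕ) : ZMod k)) 0 := by
      intro n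
      induction n with
      | zero => simpa using hbase
      | succ n ih =>
          have h' := ptrans (hallZ ((2 * n + 2 : ℕ) : ZMod k)) ih
          have he : ((2 * (n + 1) + 2 : ℕ) : ZMod k) = ((2 * n + 2 : ℕ) : ZMod k) + 2 := by
            push_cast; ring
          rw [he]
          exact h'
    have hfin := hchain (k - 1)
    have he : ((2 * (k - 1) + 2 : ℕ) : ZMod k) = 0 := by
      have : 2 * (k - 1) + 2 = 2 * k := by omega
      rw [this]
      push_cast
      simp [ZMod.natCast_self]
    rw [he] at hfin
    exact pirrefl 0 hfin
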